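/- Let (Ω, Σ, μ) be a measure space with μ(Ω) = ∞, and let (f_n) be a sequence of real-valued measurable functions on Ω converging to a measurable function f almost everywhere. Then f_n → f almost uniformly if and only if for every λ > 0 there exists an index n_λ such that μ{ω ∈ Ω : sup_{n ≥ n_λ} |f_n(ω) − f(ω)| ≥ λ} < ∞. -/

import Mathlib

open MeasureTheory Filter Topology
open scoped ENNReal

/-- Egorov's theorem for infinite measure: if `μ Ω = ∞` and `f n → g` a.e., then
`f n → g` almost uniformly iff for every `λ > 0` there is `n_λ` with
`μ {ω | sup_{n ≥ n_λ} |f n ω - g ω| ≥ λ} < ∞`. -/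
theorem egorov_infinite_measure_iff {Ω : Type*} [MeasurableSpace Ω] (μ : Measure Ω)
    (hμ : μ Set.univ = ⊤)
    (f : ℕ → Ω → ℝ) (g : Ω → ℝ)
    (hf : ∀ n, Measurable (f n)) (hg : Measurable g)
    (hae : ∀ᵐ ω ∂μ, Tendsto (fun n => f n ω) atTop (𝓝 (g ω))) :
    (∀ ε : ℝ≥0∞, 0 < ε → ∃ E : Set Ω, MeasurableSet E ∧ μ Eᶜ < ε ∧
      TendstoUniformlyOn f g atTop E) ↔
    (∀ l : ℝ, 0 < l → ∃ N : ℕ,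
      μ {ω | ENNReal.ofReal l ≤ ⨆ n ≥ N, (‖f n ω - g ω‖₊ : ℝ≥0∞)} < ⊤) := by
  constructor
  · intro h l hl
    obtain ⟨E, hE, hEc, hunif⟩ := h 1 one_pos
    rw [Metric.tendstoUniformlyOn_iff] at hunif
    obtain ⟨N, hN⟩ := (hunif (l / 2) (by linarith)).exists_forall_of_atTop
    refine ⟨N, lt_of_le_of_lt (measure_mono ?_) (hEc.trans ENNReal.one_lt_top)⟩
    intro ω hω
    by_contra hωE
    rw [Set.notMem_compl_iff] at hωE
    have hsup : (⨆ n ≥ N, (‖f n ω - g ω‖₊ : ℝ≥0∞)) ≤ ENNReal.ofReal (l / 2) := by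
      refine iSup₂_le fun n hn => ?_
      rw [← enorm_eq_nnnorm, ← ofReal_norm]
      refine ENNReal.ofReal_le_ofReal ?_
      have := hN n hn ω hωE
      rw [dist_eq_norm, norm_sub_rev] at this
      exact this.le
    have : ENNReal.ofReal l ≤ ENNReal.ofReal (l / 2) := le_trans hω hsup
    have hlt : ENNReal.ofReal (l / 2) < ENNReal.ofReal l :=
      ENNReal.ofReal_lt_ofReal_iff hl |>.2 (by linarith)
    exact absurd this hlt.not_ge
  · intro h ε hε
    obtain ⟨ε', hε'pos, hε'sum⟩ := ENNReal.exists_pos_sum_of_countable hε.ne' ℕ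
    choose N hN using fun k : ℕ => h (1 / (k + 1)) (by positivity)
    set A : ℕ → Set Ω := fun k =>
      {ω | ENNReal.ofReal (1 / (k + 1)) ≤ ⨆ n ≥ N k, (‖f n ω - g ω‖₊ : ℝ≥0∞)} with hA
    have hAmeas : ∀ k, MeasurableSet (A k) := by
      intro k
      have : Measurable fun ω => ⨆ n ≥ N k, (‖f n ω - g ω‖₊ : ℝ≥0∞) :=
        Measurable.iSup fun n => Measurable.iSup fun _ => ((hf n).sub hg).enorm
      exact this measurableSet_Ici
    have hAfin : ∀ k, μ (A k) ≠ ∞ := fun k => (hN k).ne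
    have hEg := fun k : ℕ =>
      MeasureTheory.tendstoUniformlyOn_of_ae_tendsto
        (fun n => (hf n).stronglyMeasurable) hg.stronglyMeasurable (hAmeas k) (hAfin k)
        (by filter_upwards [hae] with ω hω _ using hω) (hε'pos k)
    choose t hts htm hμt hu using hEg
    refine ⟨(⋃ k, t k)ᶜ, (MeasurableSet.iUnion htm).compl, ?_, ?_⟩
    · rw [compl_compl]
      calc μ (⋃ k, t k) ≤ ∑' k, μ (t k) := measure_iUnion_le t
        _ ≤ ∑' k, (ε' k : ℝ≥0∞) := by
            refine ENNReal.tsum_le_tsum fun k => ?_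
            simpa [ENNReal.ofReal_coe_nnreal] using hμt k
        _ < ε := hε'sum
    · rw [Metric.tendstoUniformlyOn_iff]
      intro δ hδ
      obtain ⟨k, hk⟩ := exists_nat_one_div_lt hδ
      filter_upwards [eventually_ge_atTop (N k), Metric.tendstoUniformlyOn_iff.1 (hu k) δ hδ] with n hn hn' ω hωE
      by_cases hωA : ω ∈ A k
      · refine hn' ω ⟨hωA, fun hωt => ?_⟩
        exact hωE (Set.mem_iUnion.2 ⟨k, hωt⟩)
      · have hsup : (⨆ m ≥ N k, (‖f m ω - g ω‖₊ : ℝ≥0∞)) < ENNReal.ofReal (1 / (k + 1)) :=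
          lt_of_not_ge hωA
        have hterm : (‖f n ω - g ω‖₊ : ℝ≥0∞) < ENNReal.ofReal (1 / (k + 1)) :=
          lt_of_le_of_lt (le_iSup₂ (f := fun m (_ : m ≥ N k) => (‖f m ω - g ω‖₊ : ℝ≥0∞)) n hn)
            hsup
        rw [← enorm_eq_nnnorm, ← ofReal_norm,
          ENNReal.ofReal_lt_ofReal_iff (by positivity)] at hterm
        rw [dist_eq_norm, norm_sub_rev]
        exact hterm.trans hk
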